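/- For a simplicial category A, the simplicial nerve of the relative category Rel(A) = (bA, id-maps) is naturally isomorphic to the bisimplicial set obtained by applying the classical nerve dimensionwise to the simplicial category-object YA: N(Rel A) ≅ n(YA). -/

import Mathlib

open CategoryTheory

/-- A (small) relative category: a category `C` together with a wide subcategory `W`
of weak equivalences (containing all identities and closed under composition). -/
structure RelativeCat where
  C : Type
  [cat : SmallCategory C]
  W : MorphismProperty C
  id_mem : ∀ X : C, W (𝟙 X)
  comp_mem : ∀ {X Y Z : C} (f : X ⟶ Y) (g : Y ⟶ Z), W f → W g → W (f ≫ g)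

attribute [instance] RelativeCat.cat

/-- A relative functor: a weak-equivalence-preserving functor. -/
structure RelFunctor (X Y : RelativeCat) where
  F : X.C ⥤ Y.C
  mapW : ∀ {A B : X.C} (f : A ⟶ B), X.W f → Y.W (F.map f)

/-- A single natural weak equivalence between two functors `X.C ⥤ Y.C`:
a natural transformation all of whose components are weak equivalences of `Y`. -/
def NatWE (X Y : RelativeCat) (F G : X.C ⥤ Y.C) : Prop :=
  ∃ η : F ⟶ G, ∀ A : X.C, Y.W (η.app A)

/-- Two functors are naturally weakly equivalent if they are connected by a finite
zigzag of natural weak equivalences. -/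
def NatWEquiv (X Y : RelativeCat) (F G : X.C ⥤ Y.C) : Prop :=
  Relation.EqvGen (NatWE X Y) F G

/-- A relative functor is a homotopy equivalence if it admits a homotopy inverse. -/
def IsHomotopyEquiv {X Y : RelativeCat} (f : RelFunctor X Y) : Prop :=
  ∃ g : RelFunctor Y X,
    NatWEquiv X X (f.F ⋙ g.F) (𝟭 X.C) ∧ NatWEquiv Y Y (g.F ⋙ f.F) (𝟭 Y.C)

/-- The two out of three property for the weak equivalences of a relative category. -/
def TwoOutOfThree (X : RelativeCat) : Prop :=
  ∀ {A B C : X.C} (u : A ⟶ B) (v : B ⟶ C),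
    (X.W u → X.W v → X.W (u ≫ v)) ∧
    (X.W u → X.W (u ≫ v) → X.W v) ∧
    (X.W v → X.W (u ≫ v) → X.W u)

open CategoryTheory

/-- The identity relative functor. -/
def RelFunctor.id (X : RelativeCat) : RelFunctor X X :=
  ⟨𝟭 X.C, fun _ h => h⟩

/-- Composition of relative functors. -/
def RelFunctor.comp {X Y Z : RelativeCat} (f : RelFunctor X Y) (g : RelFunctor Y Z) :
    RelFunctor X Z :=
  ⟨f.F ⋙ g.F, fun φ h => g.mapW (f.F.map φ) (f.mapW φ h)⟩

/-- `p̂`: the relative poset `[p]` in which only the identities are weak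
equivalences. -/
def hatRel (p : SimplexCategory) : RelativeCat where
  C := Fin (p.len + 1)
  W := fun {X Y} _ => X = Y
  id_mem _ := rfl
  comp_mem _ _ h₁ h₂ := h₁.trans h₂

/-- `q̌`: the relative poset `[q]` in which all maps are weak equivalences. -/
def chkRel (q : SimplexCategory) : RelativeCat where
  C := Fin (q.len + 1)
  W := fun {_X _Y} _ => True
  id_mem _ := trivial
  comp_mem _ _ _ _ := trivial

/-- The product of two relative categories. -/
def prodRel (X Y : RelativeCat) : RelativeCat where
  C := X.C × Y.C
  cat := inferInstance
  W := fun {_P _Q} f => X.W f.1 ∧ Y.W f.2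
  id_mem _ := ⟨X.id_mem _, Y.id_mem _⟩
  comp_mem f g hf hg := ⟨X.comp_mem _ _ hf.1 hg.1, Y.comp_mem _ _ hf.2 hg.2⟩

/-- The relative functor `p̂' → p̂` induced by a simplicial operator. -/
def hatMap {p p' : SimplexCategory} (t : p ⟶ p') :
    RelFunctor (hatRel p) (hatRel p') :=
  ⟨t.toOrderHom.monotone.functor, fun {A B} _ h => congrArg t.toOrderHom h⟩

/-- The relative functor `q̌' → q̌` induced by a simplicial operator. -/
def chkMap {q q' : SimplexCategory} (s : q ⟶ q') :
    RelFunctor (chkRel q) (chkRel q') :=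
  ⟨s.toOrderHom.monotone.functor, fun _ _ => trivial⟩

/-- The product of two relative functors. -/
def prodRelFunctor {X X' Y Y' : RelativeCat}
    (F : RelFunctor X X') (G : RelFunctor Y Y') :
    RelFunctor (prodRel X Y) (prodRel X' Y') :=
  ⟨F.F.prod G.F, fun f h => ⟨F.mapW f.1 h.1, G.mapW f.2 h.2⟩⟩

/-- The `(p,q)`-simplices of the simplicial nerve of a relative category `X`:
the relative functors `p̂ × q̌ → X`. -/
def NSet (X : RelativeCat) (p q : SimplexCategory) : Type :=
  RelFunctor (prodRel (hatRel p) (chkRel q)) X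

/-- The bisimplicial operator action on the simplicial nerve, by precomposition. -/
def NMap {X : RelativeCat} {p p' q q' : SimplexCategory}
    (t : p' ⟶ p) (s : q' ⟶ q) : NSet X p q → NSet X p' q' :=
  fun F => (prodRelFunctor (hatMap t) (chkMap s)).comp F

/-- Postcomposition with a relative functor. -/
def NPost {X Y : RelativeCat} (g : RelFunctor X Y) {p q : SimplexCategory} :
    NSet X p q → NSet Y p q :=
  fun F => F.comp g

/-- A (small) simplicial category with fixed object set `O`, presented as the
equivalent data of a simplicial diagram of categories `A_•` all having object
set `O`, on which the simplicial operators act as the identity on objects: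
for each pair of objects a hom simplicial set, together with level-wise
identities and compositions which are compatible with the simplicial operators. -/
structure SCat where
  O : Type
  H : O → O → SSet
  ident : ∀ (X : O) (p : SimplexCategoryᵒᵖ), (H X X).obj p
  comp : ∀ {X Y Z : O} {p : SimplexCategoryᵒᵖ},
    (H X Y).obj p → (H Y Z).obj p → (H X Z).obj p
  id_comp : ∀ {X Y : O} {p : SimplexCategoryᵒᵖ} (f : (H X Y).obj p),
    comp (ident X p) f = f
  comp_id : ∀ {X Y : O} {p : SimplexCategoryᵒᵖ} (f : (H X Y).obj p),
    comp f (ident Y p) = f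
  assoc : ∀ {W X Y Z : O} {p : SimplexCategoryᵒᵖ} (f : (H W X).obj p)
    (g : (H X Y).obj p) (h : (H Y Z).obj p),
    comp (comp f g) h = comp f (comp g h)
  comp_natural : ∀ {X Y Z : O} {p q : SimplexCategoryᵒᵖ} (t : p ⟶ q)
    (f : (H X Y).obj p) (g : (H Y Z).obj p),
    (H X Z).map t (comp f g) = comp ((H X Y).map t f) ((H Y Z).map t g)
  ident_natural : ∀ (X : O) {p q : SimplexCategoryᵒᵖ} (t : p ⟶ q),
    (H X X).map t (ident X p) = ident X q

namespace SCat

variable (A : SCat)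

/-- Objects of the Grothendieck construction `bA`: pairs `(p, A)` of a simplicial
dimension and an object of `A`. -/
structure BObj where
  p : SimplexCategoryᵒᵖ
  pt : A.O

variable {A}

/-- Morphisms `(p₁, A₁) → (p₂, A₂)` of the Grothendieck construction `bA`: pairs
`(t, a)` where `t : [p₂] → [p₁]` in `Δ` (i.e. `p₁ ⟶ p₂` in `Δᵒᵖ`) and
`a : t* A₁ = A₁ → A₂` is a morphism of `A_{p₂}`. -/
structure BHom (X Y : A.BObj) where
  t : X.p ⟶ Y.p
  a : (A.H X.pt Y.pt).obj Y.p

/-- The identity morphism `(id, id)` of `bA`. -/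
def bId (X : A.BObj) : BHom X X :=
  ⟨𝟙 X.p, A.ident X.pt X.p⟩

/-- The composition `(t', a') ∘ (t, a) = (t' t, a' ∘ (t'* a))` of `bA`. -/
def bComp {X Y Z : A.BObj} (f : BHom X Y) (g : BHom Y Z) : BHom X Z :=
  ⟨f.t ≫ g.t, A.comp ((A.H X.pt Y.pt).map g.t f.a) g.a⟩

end SCat

namespace SCat

variable {A : SCat}

/-- The Grothendieck construction `bA` as a category. -/
instance : Category A.BObj where
  Hom := BHom
  id := bId
  comp := bComp
  id_comp f := by
    cases f with
    | mk t a => simp [bId, bComp, A.ident_natural, A.id_comp]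
  comp_id f := by
    cases f with
    | mk t a => simp [bId, bComp, A.comp_id]
  assoc f g h := by
    simp [bComp, A.comp_natural, A.assoc, FunctorToTypes.map_comp_apply]

/-- A morphism of `bA` is "of the form `(t, id)`" if its second component is an
identity of `A` (which forces the underlying objects of `A` to agree). -/
def IsIdMap {X Y : A.BObj} (f : X ⟶ Y) : Prop :=
  ∃ _ : X.pt = Y.pt, HEq (BHom.a f) (A.ident X.pt Y.p)

lemma isIdMap_id (X : A.BObj) : IsIdMap (𝟙 X) := ⟨rfl, HEq.rfl⟩

lemma isIdMap_comp {X Y Z : A.BObj} {f : X ⟶ Y} {g : Y ⟶ Z}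
    (hf : IsIdMap f) (hg : IsIdMap g) : IsIdMap (f ≫ g) := by
  obtain ⟨px, x⟩ := X; obtain ⟨py, y⟩ := Y; obtain ⟨pz, z⟩ := Z
  obtain ⟨t, a⟩ := f; obtain ⟨s, b⟩ := g
  obtain ⟨h₁, e₁⟩ := hf; obtain ⟨h₂, e₂⟩ := hg
  dsimp at h₁ h₂ e₁ e₂
  subst h₁; subst h₂
  refine ⟨rfl, ?_⟩
  cases e₁; cases e₂
  show HEq (A.comp ((A.H x x).map s (A.ident x py)) (A.ident x pz)) _
  rw [A.ident_natural, A.comp_id]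

end SCat

namespace SCat

variable (A : SCat)

/-- The category `(YA)_k`: objects are `k`-chains of composable morphisms of the
Grothendieck construction `bA`, morphisms are commutative ladders in `bA` all of
whose vertical maps are of the form `(u, id)`. -/
def YObj (k : ℕ) : Type := Fin (k + 1) ⥤ A.BObj

instance (k : ℕ) : Category (YObj A k) where
  Hom C D := {η : NatTrans C D // ∀ i : Fin (k + 1), IsIdMap (η.app i)}
  id C := ⟨NatTrans.id C, fun i => isIdMap_id _⟩
  comp f g := ⟨NatTrans.vcomp f.1 g.1, fun i => isIdMap_comp (f.2 i) (g.2 i)⟩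
  id_comp f := by apply Subtype.ext; ext i; exact Category.id_comp _
  comp_id f := by apply Subtype.ext; ext i; exact Category.comp_id _
  assoc f g h := by apply Subtype.ext; ext i; exact Category.assoc _ _ _

/-- A chain is constant if all of its structure operators `t_i` are identities
(hence all the simplicial dimensions `p_i` agree). -/
def IsConstChain {k : ℕ} (C : YObj A k) : Prop :=
  ∀ {i j : Fin (k + 1)} (f : i ⟶ j),
    ∃ h : (C.obj i).p = (C.obj j).p, BHom.t (C.map f) = eqToHom h

/-- The category `(ȲA)_k ⊆ (YA)_k`: the full subcategory of constant chains. -/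
def YbarObj (k : ℕ) : Type := ObjectProperty.FullSubcategory (IsConstChain A (k := k))

instance (k : ℕ) : Category (YbarObj A k) :=
  ObjectProperty.FullSubcategory.category _

/-- The inclusion `(ȲA)_k ⊆ (YA)_k`. -/
def yInclusion (k : ℕ) : YbarObj A k ⥤ YObj A k :=
  ObjectProperty.ι _

end SCat

open SCat Opposite

/-- The relative category `Rel(A) = (bA, 𝐢𝐝)` of a simplicial category `A`. -/
def RelA (A : SCat) : RelativeCat where
  C := A.BObj
  W := fun {_X _Y} f => IsIdMap f
  id_mem X := isIdMap_id X
  comp_mem _ _ hf hg := isIdMap_comp hf hg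

/-- Reindexing of chains along a simplicial operator, making `YA` a simplicial
object in `Cat`. -/
def yReindex (A : SCat) {p p' : SimplexCategory} (t : p' ⟶ p) :
    YObj A p.len ⥤ YObj A p'.len where
  obj C := t.toOrderHom.monotone.functor ⋙ C
  map η := ⟨CategoryTheory.Functor.whiskerLeft t.toOrderHom.monotone.functor η.1,
    fun i => η.2 _⟩
  map_id _ := rfl
  map_comp _ _ := rfl

section Aux

lemma RelFunctor.ext' {X Y : RelativeCat} {F G : RelFunctor X Y} (h : F.F = G.F) : F = G := by
  cases F; cases G; cases h; rfl

@[simp] lemma y_id_app {A : SCat} {k : ℕ} (C : YObj A k) (i : Fin (k + 1)) :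
    (𝟙 C : C ⟶ C).1.app i = 𝟙 (C.obj i) := rfl

@[simp] lemma y_comp_app {A : SCat} {k : ℕ} {C D E : YObj A k} (f : C ⟶ D) (g : D ⟶ E)
    (i : Fin (k + 1)) : (f ≫ g).1.app i = f.1.app i ≫ g.1.app i := rfl

lemma yhom_hext {A : SCat} {k : ℕ} {C D C' D' : YObj A k} (hC : C = C') (hD : D = D')
    (f : C ⟶ D) (f' : C' ⟶ D') (h : ∀ i, HEq (f.1.app i) (f'.1.app i)) : HEq f f' := by
  subst hC; subst hD
  apply heq_of_eq; apply Subtype.ext; apply NatTrans.ext; funext i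
  exact eq_of_heq (h i)

variable (A : SCat) (p q : SimplexCategory)

/-- A morphism of the product relative poset `p̂ × q̌`, from a pair of morphisms. -/
def phom {i i' : Fin (p.len + 1)} {j j' : Fin (q.len + 1)} (u : i ⟶ i') (g : j ⟶ j') :
    ((i, j) : (prodRel (hatRel p) (chkRel q)).C) ⟶ ((i', j') : (prodRel (hatRel p) (chkRel q)).C) :=
  (u, g)

lemma phom_id (i : Fin (p.len + 1)) (j : Fin (q.len + 1)) :
    phom p q (𝟙 i) (𝟙 j) = 𝟙 (((i, j) : (prodRel (hatRel p) (chkRel q)).C)) := rfl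

lemma phom_comp {i i' i'' : Fin (p.len + 1)} {j j' j'' : Fin (q.len + 1)}
    (u : i ⟶ i') (u' : i' ⟶ i'') (g : j ⟶ j') (g' : j' ⟶ j'') :
    phom p q u g ≫ phom p q u' g' = phom p q (u ≫ u') (g ≫ g') := rfl

lemma phom_eta {x y : (prodRel (hatRel p) (chkRel q)).C} (f : x ⟶ y) :
    f = phom p q f.1 f.2 := rfl

lemma phom_W {i : Fin (p.len + 1)} {j j' : Fin (q.len + 1)} (u : i ⟶ i) (g : j ⟶ j') :
    (prodRel (hatRel p) (chkRel q)).W (phom p q u g) := ⟨rfl, trivial⟩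

variable {A p q} in
/-- A column of a relative functor `p̂ × q̌ → Rel(A)`, as an object of `(YA)_p`. -/
def curryObj (F : NSet (RelA A) p q) (j : Fin (q.len + 1)) : YObj A p.len where
  obj i := F.F.obj (i, j)
  map u := F.F.map (phom p q u (𝟙 j))
  map_id i := by
    show F.F.map (phom p q (𝟙 i) (𝟙 j)) = 𝟙 (F.F.obj (i, j))
    rw [phom_id]; exact F.F.map_id (i, j)
  map_comp u v := by erw [← F.F.map_comp, phom_comp, Category.id_comp]

variable {A p q} in
/-- The ladder between two columns of a relative functor `p̂ × q̌ → Rel(A)`. -/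
def curryHom (F : NSet (RelA A) p q) {j j' : Fin (q.len + 1)} (g : j ⟶ j') :
    curryObj F j ⟶ curryObj F j' :=
  ⟨{ app := fun i => F.F.map (phom p q (𝟙 i) g)
     naturality := fun i i' u => by
      show F.F.map (phom p q u (𝟙 j)) ≫ F.F.map (phom p q (𝟙 i') g) =
        F.F.map (phom p q (𝟙 i) g) ≫ F.F.map (phom p q u (𝟙 j'))
      erw [← F.F.map_comp, ← F.F.map_comp, phom_comp] },
   fun i => F.mapW (phom p q (𝟙 i) g) (phom_W p q _ _)⟩

@[simp] lemma curryHom_app {F : NSet (RelA A) p q} {j j' : Fin (q.len + 1)} (g : j ⟶ j')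
    (i : Fin (p.len + 1)) : (curryHom F g).1.app i = F.F.map (phom p q (𝟙 i) g) := rfl

variable {A p q} in
/-- Currying: from a relative functor `p̂ × q̌ → Rel(A)` to a `q`-chain in `(YA)_p`. -/
def curryN (F : NSet (RelA A) p q) : ComposableArrows (YObj A p.len) q.len where
  obj := curryObj F
  map := curryHom F
  map_id j := by
    apply Subtype.ext; apply NatTrans.ext; funext i
    show F.F.map (phom p q (𝟙 i) (𝟙 j)) = (𝟙 (curryObj F j) : _ ⟶ _).1.app i
    rw [phom_id, y_id_app]; exact F.F.map_id (i, j)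
  map_comp g h := by
    apply Subtype.ext; apply NatTrans.ext; funext i
    show F.F.map (phom p q (𝟙 i) (g ≫ h)) =
      (curryHom F g ≫ curryHom F h : _ ⟶ _).1.app i
    erw [y_comp_app, curryHom_app, curryHom_app, ← F.F.map_comp, phom_comp, Category.id_comp]

variable {A p q} in
/-- Uncurrying: from a `q`-chain in `(YA)_p` to a relative functor `p̂ × q̌ → Rel(A)`. -/
def uncurryN (G : ComposableArrows (YObj A p.len) q.len) : NSet (RelA A) p q where
  F :=
    { obj := fun x => (G.obj x.2).obj x.1
      map := fun {x y} f => (G.obj x.2).map f.1 ≫ (G.map f.2).1.app y.1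
      map_id := fun x => by
        show (G.obj x.2).map (𝟙 x.1) ≫ (G.map (𝟙 x.2)).1.app x.1 = 𝟙 ((G.obj x.2).obj x.1)
        erw [G.map_id, y_id_app, Category.comp_id, CategoryTheory.Functor.map_id]
      map_comp := fun {x y z} f g => by
        show (G.obj x.2).map (f.1 ≫ g.1) ≫ (G.map (f.2 ≫ g.2)).1.app z.1 =
          ((G.obj x.2).map f.1 ≫ (G.map f.2).1.app y.1) ≫
            ((G.obj y.2).map g.1 ≫ (G.map g.2).1.app z.1)
        erw [G.map_comp, y_comp_app, CategoryTheory.Functor.map_comp, Category.assoc,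
          Category.assoc]
        congr 1
        rw [← Category.assoc, ← Category.assoc]
        congr 1
        exact (G.map f.2).1.naturality g.1 }
  mapW := fun {x y} f hf => by
    obtain ⟨h, -⟩ := hf
    obtain ⟨i, j⟩ := x; obtain ⟨i', j'⟩ := y
    have h' : i = i' := h
    subst h'
    show IsIdMap ((G.obj j).map f.1 ≫ (G.map f.2).1.app i)
    have hf1 : f.1 = 𝟙 i := rfl
    erw [hf1, CategoryTheory.Functor.map_id, Category.id_comp]
    exact (G.map f.2).2 i

variable {A p q} in
lemma left_inv_N (F : NSet (RelA A) p q) : uncurryN (curryN F) = F := by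
  apply RelFunctor.ext'
  refine CategoryTheory.Functor.hext (fun x => rfl) (fun x y f => heq_of_eq ?_)
  show F.F.map (phom p q f.1 (𝟙 x.2)) ≫ F.F.map (phom p q (𝟙 y.1) f.2) = F.F.map f
  erw [← F.F.map_comp, phom_comp, Category.comp_id, Category.id_comp, ← phom_eta]
  rfl

variable {A p q} in
lemma right_inv_N (G : ComposableArrows (YObj A p.len) q.len) :
    curryN (uncurryN G) = G := by
  have hobj : ∀ j, (curryN (uncurryN G)).obj j = G.obj j := by
    intro j
    refine CategoryTheory.Functor.hext (fun i => rfl) (fun i i' u => heq_of_eq ?_)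
    show (G.obj j).map u ≫ (G.map (𝟙 j)).1.app i' = (G.obj j).map u
    rw [G.map_id, y_id_app, Category.comp_id]
  refine CategoryTheory.Functor.hext hobj (fun j j' g => ?_)
  refine yhom_hext (hobj j) (hobj j') _ _ (fun i => heq_of_eq ?_)
  show (G.obj j).map (𝟙 i) ≫ (G.map g).1.app i = (G.map g).1.app i
  erw [CategoryTheory.Functor.map_id, Category.id_comp]

end Aux

/-- For a simplicial category `A`, the simplicial nerve of the relative category
`Rel(A) = (bA, 𝐢𝐝)` is canonically isomorphic, as a bisimplicial set, to the
result of applying the classical nerve dimensionwise to the simplicial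
category-object `YA`: `N(Rel A) ≅ n(YA)`. -/
theorem simplicialNerve_relA_iso_nerve_Y (A : SCat) :
    ∃ e : ∀ p q : SimplexCategory,
      NSet (RelA A) p q ≃ (nerve (YObj A p.len)).obj (op q),
      (∀ (p q q' : SimplexCategory) (s : q' ⟶ q) (F : NSet (RelA A) p q),
        e p q' (NMap (𝟙 p) s F) = (nerve (YObj A p.len)).map s.op (e p q F)) ∧
      (∀ (p p' : SimplexCategory) (t : p' ⟶ p) (q : SimplexCategory)
        (F : NSet (RelA A) p q),
        e p' q (NMap t (𝟙 q) F) =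
          (nerveFunctor.map (X := Cat.of (YObj A p.len)) (Y := Cat.of (YObj A p'.len))
            (yReindex A t).toCatHom).app (op q) (e p q F)) := by
  refine ⟨fun p q => ⟨curryN, uncurryN, left_inv_N, right_inv_N⟩,
    fun p q q' s F => ?_, fun p p' t q F => ?_⟩
  · rfl
  · rfl
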